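/- Let (X, Σ) be a measurable space and let μ, ν be finite (countably additive) measures on Σ. Suppose ν is separable, i.e. the pseudometric space (Σ, d_ν) with d_ν(A,B) = ν(A Δ B) is separable, and suppose μ is nowhere separable: for every B ∈ Σ with μ(B) > 0, the restriction of μ to B is not separable (the pseudometric space ({A ∈ Σ : A ⊆ B}, d_μ) is not separable). Then μ and ν are mutually singular. -/

import Mathlib

open MeasureTheory Set Filter Topology
open scoped symmDiff ENNReal

noncomputable section

universe u v

/-- If `ν` is a separable finite measure and `μ` is a nowhere separable finite measure
(on the same measurable space), then `μ` and `ν` are mutually singular. -/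
theorem nowhere_separable_singular_to_separable
    {X : Type u} [MeasurableSpace X] (μ ν : Measure X)
    [IsFiniteMeasure μ] [IsFiniteMeasure ν]
    (hsep : ∃ D : Set (Set X), D.Countable ∧ (∀ B ∈ D, MeasurableSet B) ∧
      ∀ A : Set X, MeasurableSet A → ∀ ε : ℝ≥0∞, 0 < ε → ∃ B ∈ D, ν (A ∆ B) < ε)
    (hnsep : ∀ B : Set X, MeasurableSet B → 0 < μ B →
      ¬ ∃ D : Set (Set X), D.Countable ∧ (∀ C ∈ D, MeasurableSet C ∧ C ⊆ B) ∧
        ∀ A : Set X, MeasurableSet A → A ⊆ B →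
          ∀ ε : ℝ≥0∞, 0 < ε → ∃ C ∈ D, μ (A ∆ C) < ε) :
    μ ⟂ₘ ν := by
  obtain ⟨S, hSm, hS0, hSc⟩ := Measure.mutuallySingular_singularPart μ ν
  set f := μ.rnDeriv ν with hf
  have hadd : μ.singularPart ν + ν.withDensity f = μ :=
    (Measure.haveLebesgueDecomposition_add μ ν).symm
  -- On measurable subsets of S, μ agrees with the a.c. part
  have hkey : ∀ E : Set X, MeasurableSet E → E ⊆ S → μ E = ∫⁻ x in E, f x ∂ν := by
    intro E hEm hES
    have h1 : μ.singularPart ν E = 0 :=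
      le_antisymm (hS0 ▸ measure_mono hES) zero_le
    calc μ E = (μ.singularPart ν + ν.withDensity f) E := by rw [hadd]
      _ = μ.singularPart ν E + ν.withDensity f E := rfl
      _ = ν.withDensity f E := by rw [h1, zero_add]
      _ = ∫⁻ x in E, f x ∂ν := withDensity_apply _ hEm
  have hfin : ∫⁻ x, f x ∂ν ≠ ∞ := (Measure.lintegral_rnDeriv_lt_top μ ν).ne
  refine ⟨S, hSm, ?_, hSc⟩
  by_contra hpos
  apply hnsep S hSm (pos_iff_ne_zero.mpr hpos)
  obtain ⟨D, hDc, hDm, hDd⟩ := hsep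
  refine ⟨(fun B => B ∩ S) '' D, hDc.image _, ?_, ?_⟩
  · rintro C ⟨B, hB, rfl⟩
    exact ⟨(hDm B hB).inter hSm, inter_subset_right⟩
  · intro A hAm hAS ε hε
    obtain ⟨δ, hδ0, hδ⟩ := exists_pos_setLIntegral_lt_of_measure_lt hfin hε.ne'
    obtain ⟨B, hB, hBδ⟩ := hDd A hAm δ hδ0
    refine ⟨B ∩ S, mem_image_of_mem _ hB, ?_⟩
    have hsub : A ∆ (B ∩ S) ⊆ A ∆ B := by
      intro x hx
      rcases hx with hx | hx
      · exact Or.inl ⟨hx.1, fun h => hx.2 ⟨h, hAS hx.1⟩⟩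
      · exact Or.inr ⟨hx.1.1, hx.2⟩
    have hmeas : MeasurableSet (A ∆ (B ∩ S)) :=
      (hAm.diff ((hDm B hB).inter hSm)).union (((hDm B hB).inter hSm).diff hAm)
    have hSsub : A ∆ (B ∩ S) ⊆ S := by
      intro x hx
      rcases hx with hx | hx
      · exact hAS hx.1
      · exact hx.1.2
    rw [hkey _ hmeas hSsub]
    exact hδ _ (lt_of_le_of_lt (measure_mono hsub) hBδ)
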